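/- arXiv:2009.01578 — 3 statements merged into one kernel-verified Lean document; each statement's English description precedes it below -/
import Mathlib

section
/- For every nonnegative integer k and every c > 0, the integral ∫₀^{2π} |cos θ|^k e^{-c(cos²θ) t} dθ is bounded above by a constant (depending on k and c) times t^{-(1+k)/2} for all t ≥ 1. -/
open Real MeasureTheory intervalIntegral

lemma aux_abs_cos_eq (θ : ℝ) : |cos θ| = |sin (θ - π/2)| := by
  rw [show θ - π/2 = -(π/2 - θ) by ring, Real.sin_neg, abs_neg, Real.sin_pi_div_two_sub]

lemma aux_abs_cos_eq' (θ : ℝ) : |cos θ| = |sin (θ - 3*π/2)| := by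
  rw [show θ - 3*π/2 = (θ - π/2) - π by ring, Real.sin_sub_pi, abs_neg, ← aux_abs_cos_eq]

lemma aux_jordan {u : ℝ} (hu : |u| ≤ π/2) : 2/π * |u| ≤ |sin u| := by
  rcases le_or_gt 0 u with h | h
  · rw [abs_of_nonneg h, abs_of_nonneg (Real.sin_nonneg_of_nonneg_of_le_pi h
      (by rw [abs_of_nonneg h] at hu; linarith [Real.pi_pos]))]
    exact Real.mul_le_sin h (by rwa [abs_of_nonneg h] at hu)
  · rw [abs_of_neg h] at hu ⊢
    have : sin u ≤ 0 := Real.sin_nonpos_of_nonpos_of_neg_pi_le h.le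
      (by linarith [Real.pi_pos])
    rw [abs_of_nonpos this, ← Real.sin_neg]
    exact Real.mul_le_sin (by linarith) hu

lemma aux_gauss (k : ℕ) (s : ℝ) (hs : 0 < s) :
    ∫ x : ℝ, |x| ^ k * exp (-s * x ^ 2)
      = Real.Gamma (((k : ℝ) + 1)/2) * s ^ (-(1 + (k:ℝ))/2) := by
  have h1 : ∫ x : ℝ, |x| ^ k * exp (-s * x ^ 2)
      = 2 * ∫ x in Set.Ioi (0:ℝ), x ^ k * exp (-s * x ^ 2) := by
    rw [← integral_comp_abs (f := fun y : ℝ => y ^ k * exp (-s * y ^ 2))]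
    congr 1; funext x; rw [sq_abs]
  rw [h1]
  have h2 : ∫ x in Set.Ioi (0:ℝ), x ^ k * exp (-s * x ^ 2)
      = ∫ x in Set.Ioi (0:ℝ), x ^ (k:ℝ) * exp (-s * x ^ (2:ℝ)) := by
    refine setIntegral_congr_fun measurableSet_Ioi (fun x hx => ?_)
    rw [← Real.rpow_natCast x k, ← Real.rpow_natCast x 2]
    norm_num
  rw [h2, integral_rpow_mul_exp_neg_mul_rpow two_pos (lt_of_lt_of_le neg_one_lt_zero (Nat.cast_nonneg k)) hs]
  rw [show -((k:ℝ) + 1)/2 = -(1 + (k:ℝ))/2 by ring]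
  ring

lemma aux_ptwise (k : ℕ) {c t : ℝ} (hc : 0 < c) (ht : 1 ≤ t) {θ a : ℝ}
    (habs : |cos θ| = |sin (θ - a)|) (hd : |θ - a| ≤ π/2) :
    |cos θ| ^ k * exp (-c * (cos θ ^ 2) * t) ≤
      |θ - a| ^ k * exp (-(c * (2/π)^2 * t) * (θ - a) ^ 2) := by
  have h1 : |cos θ| ≤ |θ - a| := habs ▸ Real.abs_sin_le_abs
  have h2 : 2/π * |θ - a| ≤ |cos θ| := habs ▸ aux_jordan hd
  have hπ := Real.pi_pos
  refine mul_le_mul (pow_le_pow_left₀ (abs_nonneg _) h1 k) ?_ (exp_nonneg _)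
    (by positivity)
  refine Real.exp_le_exp.2 ?_
  have h3 : (2/π * |θ - a|) ^ 2 ≤ cos θ ^ 2 := by
    rw [← sq_abs (cos θ)]
    exact pow_le_pow_left₀ (by positivity) h2 2
  have h4 : (2/π)^2 * (θ - a)^2 ≤ cos θ ^ 2 := by
    calc (2/π)^2 * (θ - a)^2 = (2/π * |θ - a|)^2 := by rw [mul_pow, sq_abs]
    _ ≤ _ := h3
  nlinarith [mul_le_mul_of_nonneg_left h4 hc.le, mul_le_mul_of_nonneg_right
    (mul_le_mul_of_nonneg_left h4 hc.le) (by linarith : (0:ℝ) ≤ t)]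

lemma aux_half (k : ℕ) {c t : ℝ} (hc : 0 < c) (ht : 1 ≤ t) {lo a : ℝ}
    (ha : a = lo + π/2)
    (habs : ∀ θ, |cos θ| = |sin (θ - a)|) :
    (∫ θ in lo..(lo + π), |cos θ| ^ k * exp (-c * (cos θ ^ 2) * t)) ≤
      Real.Gamma (((k : ℝ) + 1)/2) * (c * (2/π)^2 * t) ^ (-(1 + (k:ℝ))/2) := by
  have hπ := Real.pi_pos
  set s : ℝ := c * (2/π)^2 * t with hs_def
  have hs : 0 < s := by positivity
  have hInt : Integrable (fun x : ℝ => |x - a| ^ k * exp (-s * (x - a) ^ 2)) := by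
    have hb : Integrable (fun x : ℝ => |x| ^ k * exp (-s * x ^ 2)) := by
      have h := (integrable_rpow_mul_exp_neg_mul_sq hs
        (show (-1:ℝ) < (k:ℝ) from lt_of_lt_of_le neg_one_lt_zero (Nat.cast_nonneg k))).abs
      simpa [Real.rpow_natCast, abs_mul, abs_pow, abs_of_nonneg (exp_nonneg _)] using h
    exact hb.comp_sub_right a
  calc (∫ θ in lo..(lo + π), |cos θ| ^ k * exp (-c * (cos θ ^ 2) * t))
      ≤ ∫ θ in lo..(lo + π), |θ - a| ^ k * exp (-s * (θ - a) ^ 2) := by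
        refine intervalIntegral.integral_mono_on (by linarith) ?_ ?_ ?_
        · exact (Continuous.intervalIntegrable (by fun_prop) _ _)
        · exact hInt.intervalIntegrable
        · intro x hx
          refine aux_ptwise k hc ht (habs x) ?_
          rw [abs_le]; constructor <;> [skip; skip] <;>
            (simp only [Set.mem_Icc] at hx; rw [ha]) <;> linarith [hx.1, hx.2]
    _ = ∫ θ in Set.Ioc lo (lo + π), |θ - a| ^ k * exp (-s * (θ - a) ^ 2) := by
        rw [intervalIntegral.integral_of_le (by linarith)]
    _ ≤ ∫ θ : ℝ, |θ - a| ^ k * exp (-s * (θ - a) ^ 2) := by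
        refine setIntegral_le_integral hInt (Filter.Eventually.of_forall fun x => ?_)
        positivity
    _ = ∫ x : ℝ, |x| ^ k * exp (-s * x ^ 2) :=
        integral_sub_right_eq_self (fun x : ℝ => |x| ^ k * exp (-s * x ^ 2)) a
    _ = _ := aux_gauss k s hs

/-- For every `k : ℕ` and `c > 0`, there is a constant `C > 0`
(depending on `k` and `c`) with
`∫₀^{2π} |cos θ|^k e^{-c(cos²θ)t} dθ ≤ C t^{-(1+k)/2}` for all `t ≥ 1`. -/
theorem stmt3 (k : ℕ) (c : ℝ) (hc : 0 < c) :
    ∃ C : ℝ, 0 < C ∧ ∀ t : ℝ, 1 ≤ t →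
      (∫ θ in (0:ℝ)..(2 * π), |cos θ| ^ k * exp (-c * (cos θ ^ 2) * t)) ≤
        C * t ^ (-(1 + (k : ℝ)) / 2) := by
  have hπ := Real.pi_pos
  set e : ℝ := -(1 + (k:ℝ))/2 with he
  refine ⟨2 * Real.Gamma (((k : ℝ) + 1)/2) * (c * (2/π)^2) ^ e, ?_, fun t ht => ?_⟩
  · have := Real.Gamma_pos_of_pos (show (0:ℝ) < ((k:ℝ)+1)/2 by positivity)
    positivity
  · have hsplit : (∫ θ in (0:ℝ)..(2 * π), |cos θ| ^ k * exp (-c * (cos θ ^ 2) * t))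
        = (∫ θ in (0:ℝ)..π, |cos θ| ^ k * exp (-c * (cos θ ^ 2) * t))
        + (∫ θ in π..(2*π), |cos θ| ^ k * exp (-c * (cos θ ^ 2) * t)) := by
      rw [intervalIntegral.integral_add_adjacent_intervals] <;>
        exact Continuous.intervalIntegrable (by fun_prop) _ _
    have h1 := aux_half k hc ht (lo := 0) (a := π/2) (by ring)
      (fun θ => aux_abs_cos_eq θ)
    have h2 := aux_half k hc ht (lo := π) (a := 3*π/2) (by ring)
      (fun θ => aux_abs_cos_eq' θ)
    have hmul : (c * (2/π)^2 * t) ^ e = (c * (2/π)^2) ^ e * t ^ e :=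
      Real.mul_rpow (by positivity) (by linarith)
    rw [hsplit]
    have h1' := h1
    have h2' := h2
    simp only [zero_add] at h1'
    rw [show π + π = 2*π by ring] at h2'  -- adjust endpoints
    calc _ ≤ Real.Gamma (((k : ℝ) + 1)/2) * (c * (2/π)^2 * t) ^ e
            + Real.Gamma (((k : ℝ) + 1)/2) * (c * (2/π)^2 * t) ^ e := add_le_add h1' h2'
      _ = 2 * Real.Gamma (((k : ℝ) + 1)/2) * ((c * (2/π)^2) ^ e * t ^ e) := by
          rw [← hmul]; ring
      _ = _ := by ring
end

section
/- Let 0 ≤ γ < 1, 0 ≤ κ < 1, and set φ := min{γ, κ, γ+κ−1}. Then there exists a constant C > 0 such that for all t ≥ 2, ∫₀^t min{1, (t−τ)^{−γ}} · min{1, τ^{−κ}} dτ ≤ C t^{−φ}. -/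
open Real MeasureTheory intervalIntegral

private lemma intble_bdd {f : ℝ → ℝ} (hf : Measurable f) {a b : ℝ} (hab : a ≤ b)
    (hb : ∀ x ∈ Set.Ioc a b, |f x| ≤ 1) : IntervalIntegrable f volume a b := by
  rw [intervalIntegrable_iff_integrableOn_Ioc_of_le hab]
  refine Integrable.mono' (g := fun _ => (1 : ℝ))
    (integrableOn_const measure_Ioc_lt_top.ne) hf.aestronglyMeasurable ?_
  filter_upwards [ae_restrict_mem measurableSet_Ioc] with x hx
  simpa [Real.norm_eq_abs] using hb x hx

private lemma meas_min_rpow (c : ℝ) : Measurable fun x : ℝ => min 1 (x ^ c) := by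
  fun_prop

private lemma abs_min_rpow_le {c x : ℝ} (hx : 0 ≤ x) : |min 1 (x ^ c)| ≤ 1 := by
  rw [abs_le]
  exact ⟨by nlinarith [le_min zero_le_one (Real.rpow_nonneg hx c)], min_le_left _ _⟩

private lemma intble_min_rpow (c : ℝ) {a b : ℝ} (ha : 0 ≤ a) (hab : a ≤ b) :
    IntervalIntegrable (fun x : ℝ => min 1 (x ^ c)) volume a b :=
  intble_bdd (meas_min_rpow c) hab fun x hx => abs_min_rpow_le (le_trans ha hx.1.le)

private lemma int_min_le {c t : ℝ} (hc0 : 0 ≤ c) (hc1 : c < 1) (ht : 1 ≤ t) :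
    ∫ x in (0:ℝ)..t, min 1 (x ^ (-c)) ≤ (1 + 1 / (1 - c)) * t ^ (1 - c) := by
  have h1c : 0 < 1 - c := by linarith
  have ht0 : (0:ℝ) < t := by linarith
  rw [← integral_add_adjacent_intervals (intble_min_rpow (-c) le_rfl zero_le_one)
      (intble_min_rpow (-c) zero_le_one ht)]
  have e1 : ∫ x in (0:ℝ)..1, min 1 (x ^ (-c)) ≤ 1 := by
    calc ∫ x in (0:ℝ)..1, min 1 (x ^ (-c)) ≤ ∫ _x in (0:ℝ)..1, (1:ℝ) :=
          integral_mono_on zero_le_one (intble_min_rpow (-c) le_rfl zero_le_one)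
            intervalIntegrable_const (fun x _ => min_le_left _ _)
      _ = 1 := by simp
  have e2 : ∫ x in (1:ℝ)..t, min 1 (x ^ (-c)) ≤ t ^ (1 - c) / (1 - c) := by
    calc ∫ x in (1:ℝ)..t, min 1 (x ^ (-c)) ≤ ∫ x in (1:ℝ)..t, x ^ (-c) :=
          integral_mono_on ht (intble_min_rpow (-c) zero_le_one ht)
            (intervalIntegrable_rpow' (by linarith)) (fun x _ => min_le_right _ _)
      _ = (t ^ (-c + 1) - 1 ^ (-c + 1)) / (-c + 1) := integral_rpow (Or.inl (by linarith))
      _ ≤ t ^ (1 - c) / (1 - c) := by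
          rw [Real.one_rpow, (by ring : -c + 1 = 1 - c)]
          gcongr
          linarith
  have ht1 : (1:ℝ) ≤ t ^ (1 - c) := Real.one_le_rpow ht (by linarith)
  have : (1 + 1 / (1 - c)) * t ^ (1 - c) = t ^ (1 - c) + t ^ (1 - c) / (1 - c) := by
    field_simp
  rw [this]
  exact add_le_add (e1.trans ht1) e2

private lemma key_pw {γ κ t : ℝ} (hγ0 : 0 ≤ γ) (hκ0 : 0 ≤ κ) (ht : 0 < t) {τ : ℝ}
    (hτ : τ ∈ Set.Icc 0 t) :
    min 1 ((t - τ) ^ (-γ)) * min 1 (τ ^ (-κ)) ≤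
      (t / 2) ^ (-κ) * min 1 ((t - τ) ^ (-γ)) + (t / 2) ^ (-γ) * min 1 (τ ^ (-κ)) := by
  obtain ⟨h0, h1⟩ := hτ
  have ht2 : (0:ℝ) < t / 2 := by linarith
  have hA0 : 0 ≤ min 1 ((t - τ) ^ (-γ)) := le_min zero_le_one (Real.rpow_nonneg (by linarith) _)
  have hA1 : min 1 ((t - τ) ^ (-γ)) ≤ 1 := min_le_left _ _
  have hB0 : 0 ≤ min 1 (τ ^ (-κ)) := le_min zero_le_one (Real.rpow_nonneg h0 _)
  have hB1 : min 1 (τ ^ (-κ)) ≤ 1 := min_le_left _ _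
  rcases le_total τ (t / 2) with h | h
  · have hb : min 1 ((t - τ) ^ (-γ)) ≤ (t / 2) ^ (-γ) :=
      (min_le_right _ _).trans
        (Real.rpow_le_rpow_of_nonpos ht2 (by linarith) (by linarith))
    calc min 1 ((t - τ) ^ (-γ)) * min 1 (τ ^ (-κ)) ≤ (t / 2) ^ (-γ) * min 1 (τ ^ (-κ)) :=
          mul_le_mul_of_nonneg_right hb hB0
      _ ≤ _ := le_add_of_nonneg_left (mul_nonneg (Real.rpow_nonneg ht2.le _) hA0)
  · have hb : min 1 (τ ^ (-κ)) ≤ (t / 2) ^ (-κ) :=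
      (min_le_right _ _).trans
        (Real.rpow_le_rpow_of_nonpos ht2 h (by linarith))
    calc min 1 ((t - τ) ^ (-γ)) * min 1 (τ ^ (-κ))
        = min 1 (τ ^ (-κ)) * min 1 ((t - τ) ^ (-γ)) := mul_comm _ _
      _ ≤ (t / 2) ^ (-κ) * min 1 ((t - τ) ^ (-γ)) := mul_le_mul_of_nonneg_right hb hA0
      _ ≤ _ := le_add_of_nonneg_right (mul_nonneg (Real.rpow_nonneg ht2.le _) hB0)

private lemma half_rpow {t c : ℝ} (ht : 0 < t) : (t / 2) ^ (-c) = 2 ^ c * t ^ (-c) := by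
  rw [Real.div_rpow ht.le (by norm_num), Real.rpow_neg (by norm_num : (0:ℝ) ≤ 2),
    div_eq_mul_inv, inv_inv, mul_comm]

/-- Bianchini–Hanouzet–Natalini, Lemma 5.2: for `0 ≤ γ, κ < 1` and
`φ = min{γ, κ, γ+κ-1}`, there is `C > 0` with
`∫₀^t min{1,(t-τ)^{-γ}} min{1,τ^{-κ}} dτ ≤ C t^{-φ}` for all `t ≥ 2`. -/
theorem stmt4 (γ κ : ℝ) (hγ0 : 0 ≤ γ) (hγ1 : γ < 1) (hκ0 : 0 ≤ κ) (hκ1 : κ < 1) :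
    ∃ C : ℝ, 0 < C ∧ ∀ t : ℝ, 2 ≤ t →
      (∫ τ in (0:ℝ)..t, min 1 ((t - τ) ^ (-γ)) * min 1 (τ ^ (-κ)))
        ≤ C * t ^ (-(min γ (min κ (γ + κ - 1)))) := by
  have hCpos : (0:ℝ) < 2 ^ κ * (1 + 1 / (1 - γ)) + 2 ^ γ * (1 + 1 / (1 - κ)) := by
    have h1 : (0:ℝ) < 1 - γ := by linarith
    have h2 : (0:ℝ) < 1 - κ := by linarith
    positivity
  refine ⟨2 ^ κ * (1 + 1 / (1 - γ)) + 2 ^ γ * (1 + 1 / (1 - κ)), hCpos, fun t ht => ?_⟩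
  have ht0 : (0:ℝ) < t := by linarith
  have ht1 : (1:ℝ) ≤ t := by linarith
  have hmin : min γ (min κ (γ + κ - 1)) = γ + κ - 1 := by
    rw [min_eq_right (by linarith : γ + κ - 1 ≤ κ), min_eq_right (by linarith : γ + κ - 1 ≤ γ)]
  rw [hmin]
  -- integrability
  have hintA : IntervalIntegrable (fun τ : ℝ => min 1 ((t - τ) ^ (-γ))) volume 0 t := by
    refine intble_bdd (by fun_prop) ht0.le fun x hx => abs_min_rpow_le (by linarith [hx.2])
  have hintB : IntervalIntegrable (fun τ : ℝ => min 1 (τ ^ (-κ))) volume 0 t :=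
    intble_min_rpow (-κ) le_rfl ht0.le
  have hintP : IntervalIntegrable
      (fun τ : ℝ => min 1 ((t - τ) ^ (-γ)) * min 1 (τ ^ (-κ))) volume 0 t := by
    refine intble_bdd (by fun_prop) ht0.le fun x hx => ?_
    rw [abs_mul]
    have h1 := abs_min_rpow_le (c := -γ) (x := t - x) (by linarith [hx.2])
    have h2 := abs_min_rpow_le (c := -κ) (x := x) hx.1.le
    nlinarith [abs_nonneg (min 1 ((t - x) ^ (-γ))), abs_nonneg (min 1 (x ^ (-κ)))]
  -- pointwise bound and integral monotonicity
  have step1 : (∫ τ in (0:ℝ)..t, min 1 ((t - τ) ^ (-γ)) * min 1 (τ ^ (-κ)))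
      ≤ ∫ τ in (0:ℝ)..t,
          ((t / 2) ^ (-κ) * min 1 ((t - τ) ^ (-γ)) + (t / 2) ^ (-γ) * min 1 (τ ^ (-κ))) :=
    integral_mono_on ht0.le hintP ((hintA.const_mul _).add (hintB.const_mul _))
      (fun τ hτ => key_pw hγ0 hκ0 ht0 hτ)
  have step2 : (∫ τ in (0:ℝ)..t,
        ((t / 2) ^ (-κ) * min 1 ((t - τ) ^ (-γ)) + (t / 2) ^ (-γ) * min 1 (τ ^ (-κ))))
      = (t / 2) ^ (-κ) * (∫ τ in (0:ℝ)..t, min 1 ((t - τ) ^ (-γ)))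
        + (t / 2) ^ (-γ) * (∫ τ in (0:ℝ)..t, min 1 (τ ^ (-κ))) := by
    rw [integral_add (hintA.const_mul _) (hintB.const_mul _),
      intervalIntegral.integral_const_mul, intervalIntegral.integral_const_mul]
  have hsub : (∫ τ in (0:ℝ)..t, min 1 ((t - τ) ^ (-γ)))
      = ∫ s in (0:ℝ)..t, min 1 (s ^ (-γ)) := by
    rw [intervalIntegral.integral_comp_sub_left (fun s : ℝ => min 1 (s ^ (-γ))) t]
    norm_num
  have hIA : (∫ τ in (0:ℝ)..t, min 1 ((t - τ) ^ (-γ))) ≤ (1 + 1 / (1 - γ)) * t ^ (1 - γ) := by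
    rw [hsub]; exact int_min_le hγ0 hγ1 ht1
  have hIB : (∫ τ in (0:ℝ)..t, min 1 (τ ^ (-κ))) ≤ (1 + 1 / (1 - κ)) * t ^ (1 - κ) :=
    int_min_le hκ0 hκ1 ht1
  have ht2 : (0:ℝ) < t / 2 := by linarith
  have hcoef1 : (0:ℝ) ≤ (t / 2) ^ (-κ) := Real.rpow_nonneg ht2.le _
  have hcoef2 : (0:ℝ) ≤ (t / 2) ^ (-γ) := Real.rpow_nonneg ht2.le _
  have step3 : (t / 2) ^ (-κ) * (∫ τ in (0:ℝ)..t, min 1 ((t - τ) ^ (-γ)))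
        + (t / 2) ^ (-γ) * (∫ τ in (0:ℝ)..t, min 1 (τ ^ (-κ)))
      ≤ (t / 2) ^ (-κ) * ((1 + 1 / (1 - γ)) * t ^ (1 - γ))
        + (t / 2) ^ (-γ) * ((1 + 1 / (1 - κ)) * t ^ (1 - κ)) :=
    add_le_add (mul_le_mul_of_nonneg_left hIA hcoef1) (mul_le_mul_of_nonneg_left hIB hcoef2)
  have e1 : (t / 2) ^ (-κ) * ((1 + 1 / (1 - γ)) * t ^ (1 - γ))
      = 2 ^ κ * (1 + 1 / (1 - γ)) * t ^ (-(γ + κ - 1)) := by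
    rw [half_rpow ht0]
    have : t ^ (-κ) * t ^ (1 - γ) = t ^ (-(γ + κ - 1)) := by
      rw [← Real.rpow_add ht0]; ring_nf
    calc 2 ^ κ * t ^ (-κ) * ((1 + 1 / (1 - γ)) * t ^ (1 - γ))
        = 2 ^ κ * (1 + 1 / (1 - γ)) * (t ^ (-κ) * t ^ (1 - γ)) := by ring
      _ = _ := by rw [this]
  have e2 : (t / 2) ^ (-γ) * ((1 + 1 / (1 - κ)) * t ^ (1 - κ))
      = 2 ^ γ * (1 + 1 / (1 - κ)) * t ^ (-(γ + κ - 1)) := by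
    rw [half_rpow ht0]
    have : t ^ (-γ) * t ^ (1 - κ) = t ^ (-(γ + κ - 1)) := by
      rw [← Real.rpow_add ht0]; ring_nf
    calc 2 ^ γ * t ^ (-γ) * ((1 + 1 / (1 - κ)) * t ^ (1 - κ))
        = 2 ^ γ * (1 + 1 / (1 - κ)) * (t ^ (-γ) * t ^ (1 - κ)) := by ring
      _ = _ := by rw [this]
  calc (∫ τ in (0:ℝ)..t, min 1 ((t - τ) ^ (-γ)) * min 1 (τ ^ (-κ)))
      ≤ _ := step1
    _ = _ := step2
    _ ≤ _ := step3
    _ = (2 ^ κ * (1 + 1 / (1 - γ)) + 2 ^ γ * (1 + 1 / (1 - κ))) * t ^ (-(γ + κ - 1)) := by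
        rw [e1, e2]; ring
end

section
/- Let α, N, C > 0, let ν > 0, r ≥ 0, and let b₀, Ω₀ : ℝ² → ℝ have Fourier transforms satisfying |b̂₀(ξ)| ≤ B₀/(1+|ξ|^{1+ν+r}) and |Ω̂₀(ξ)| ≤ W₀/(1+|ξ|^{1+ν+r}). Define b(t) by b̂(t,ξ) = e^{−C(ξ₁²/|ξ|²)t} b̂₀(ξ) + (|ξ₁|/|ξ|) e^{−C(ξ₁²/|ξ|²)t} Ω̂₀(ξ). Then for t ≥ 1, ‖b(t)‖_{H^r} ≲ t^{−1/4} B₀ + t^{−3/4} W₀. -/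
open MeasureTheory Real Set
open scoped FourierTransform ENNReal

theorem stmt11_lintegral_polar (g : ℝ × ℝ → ℝ≥0∞) :
    ∫⁻ p, g p = ∫⁻ p in polarCoord.target, ENNReal.ofReal p.1 * g (polarCoord.symm p) := by
  set B : ℝ × ℝ → ℝ × ℝ →L[ℝ] ℝ × ℝ := fun p =>
    LinearMap.toContinuousLinearMap (Matrix.toLin (Module.Basis.finTwoProd ℝ) (Module.Basis.finTwoProd ℝ)
      !![cos p.2, -p.1 * sin p.2; sin p.2, p.1 * cos p.2]) with hB
  have A : ∀ p ∈ polarCoord.target, HasFDerivWithinAt polarCoord.symm (B p) polarCoord.target p :=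
    fun p _ => (hasFDerivAt_polarCoord_symm p).hasFDerivWithinAt
  have B_det : ∀ p, (B p).det = p.1 := by
    intro p
    conv_rhs => rw [← one_mul p.1, ← cos_sq_add_sin_sq p.2]
    simp only [hB, neg_mul, LinearMap.det_toContinuousLinearMap, LinearMap.det_toLin,
      Matrix.det_fin_two_of, sub_neg_eq_add]
    ring
  calc
    ∫⁻ p, g p = ∫⁻ p in polarCoord.source, g p := by
      rw [← setLIntegral_univ]
      exact setLIntegral_congr (f := g) (μ := volume) polarCoord_source_ae_eq_univ.symm
    _ = ∫⁻ p in polarCoord.symm '' polarCoord.target, g p := by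
      rw [polarCoord.symm_image_target_eq_source]
    _ = ∫⁻ p in polarCoord.target, ENNReal.ofReal |(B p).det| * g (polarCoord.symm p) := by
      exact lintegral_image_eq_lintegral_abs_det_fderiv_mul volume
        polarCoord.open_target.measurableSet A polarCoord.symm.injOn g
    _ = ∫⁻ p in polarCoord.target, ENNReal.ofReal p.1 * g (polarCoord.symm p) := by
      refine setLIntegral_congr_fun polarCoord.open_target.measurableSet
        (fun p hp => ?_)
      rw [B_det, abs_of_pos hp.1]

theorem stmt11_gauss_lint (b : ℝ) (hb : 0 < b) (c : ℝ) :
    ∫⁻ θ : ℝ, ENNReal.ofReal (exp (-(b * (θ + c) ^ 2))) = ENNReal.ofReal (Real.sqrt (π / b)) := by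
  have hm : Measurable fun u : ℝ => ENNReal.ofReal (exp (-(b * u ^ 2))) := by fun_prop
  have ht := (measurePreserving_add_right (volume : Measure ℝ) c).lintegral_comp hm
  rw [ht]
  rw [← ofReal_integral_eq_lintegral_ofReal]
  · congr 1
    rw [← integral_gaussian b]
    congr 1 with x
    ring_nf
  · have := integrable_exp_neg_mul_sq hb
    simpa [neg_mul] using this
  · exact Filter.Eventually.of_forall fun x => (exp_pos _).le

theorem stmt11_ang_le (a : ℝ) (ha : 0 < a) :
    ∫⁻ θ in Ioo (-π) π, ENNReal.ofReal (exp (-(a * cos θ ^ 2)))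
      ≤ ENNReal.ofReal (π ^ 2 / Real.sqrt a) := by
  set b : ℝ := 4 * a / π ^ 2 with hbdef
  have hπ := pi_pos
  have hb : 0 < b := by positivity
  have key : ∀ θ : ℝ, abs (π / 2 - |θ|) ≤ π / 2 →
      exp (-(a * cos θ ^ 2)) ≤ exp (-(b * (|θ| - π / 2) ^ 2)) := by
    intro θ hθ
    apply exp_le_exp.2
    rw [neg_le_neg_iff]
    have h1 : 2 / π * abs (π / 2 - |θ|) ≤ |sin (π / 2 - |θ|)| := mul_abs_le_abs_sin hθ
    rw [sin_pi_div_two_sub, cos_abs] at h1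
    have h2 : (2 / π * abs (π / 2 - |θ|)) ^ 2 ≤ |cos θ| ^ 2 :=
      pow_le_pow_left₀ (by positivity) h1 2
    rw [sq_abs] at h2
    calc b * (|θ| - π / 2) ^ 2 = a * (2 / π * abs (π / 2 - |θ|)) ^ 2 := by
          rw [mul_pow, sq_abs, show (π / 2 - |θ|) ^ 2 = (|θ| - π / 2) ^ 2 by ring, hbdef]
          field_simp
          ring
      _ ≤ a * cos θ ^ 2 := by nlinarith [ha.le]
  have hmono : Ioo (-π) π ⊆ Ioc (-π) 0 ∪ Ioc 0 π := by
    intro θ hθ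
    rcases le_or_gt θ 0 with h | h
    · exact Or.inl ⟨hθ.1, h⟩
    · exact Or.inr ⟨h, hθ.2.le⟩
  have hmeas1 : Measurable fun θ : ℝ => ENNReal.ofReal (exp (-(b * (θ - π / 2) ^ 2))) := by
    fun_prop
  have hmeas2 : Measurable fun θ : ℝ => ENNReal.ofReal (exp (-(b * (θ + π / 2) ^ 2))) := by
    fun_prop
  have hpos : ∫⁻ θ in Ioc 0 π, ENNReal.ofReal (exp (-(a * cos θ ^ 2)))
      ≤ ENNReal.ofReal (Real.sqrt (π / b)) := by
    calc ∫⁻ θ in Ioc 0 π, ENNReal.ofReal (exp (-(a * cos θ ^ 2)))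
        ≤ ∫⁻ θ in Ioc 0 π, ENNReal.ofReal (exp (-(b * (θ - π / 2) ^ 2))) := by
          refine setLIntegral_mono hmeas1 fun θ hθ => ?_
          apply ENNReal.ofReal_le_ofReal
          have h1 : abs (π / 2 - |θ|) ≤ π / 2 := by
            rw [abs_of_nonneg hθ.1.le, abs_le]; constructor <;> linarith [hθ.1.le, hθ.2]
          have := key θ h1
          rwa [abs_of_nonneg hθ.1.le] at this
      _ ≤ ∫⁻ θ : ℝ, ENNReal.ofReal (exp (-(b * (θ - π / 2) ^ 2))) := setLIntegral_le_lintegral _ _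
      _ = ENNReal.ofReal (Real.sqrt (π / b)) := by
          simp only [sub_eq_add_neg]; exact stmt11_gauss_lint b hb (-(π / 2))
  have hneg : ∫⁻ θ in Ioc (-π) 0, ENNReal.ofReal (exp (-(a * cos θ ^ 2)))
      ≤ ENNReal.ofReal (Real.sqrt (π / b)) := by
    calc ∫⁻ θ in Ioc (-π) 0, ENNReal.ofReal (exp (-(a * cos θ ^ 2)))
        ≤ ∫⁻ θ in Ioc (-π) 0, ENNReal.ofReal (exp (-(b * (θ + π / 2) ^ 2))) := by
          refine setLIntegral_mono hmeas2 fun θ hθ => ?_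
          apply ENNReal.ofReal_le_ofReal
          have h1 : abs (π / 2 - |θ|) ≤ π / 2 := by
            rw [abs_of_nonpos hθ.2, abs_le]; constructor <;> linarith [hθ.1.le, hθ.2]
          have := key θ h1
          rw [abs_of_nonpos hθ.2] at this
          rwa [show (-θ - π / 2) ^ 2 = (θ + π / 2) ^ 2 by ring] at this
      _ ≤ ∫⁻ θ : ℝ, ENNReal.ofReal (exp (-(b * (θ + π / 2) ^ 2))) := setLIntegral_le_lintegral _ _
      _ = ENNReal.ofReal (Real.sqrt (π / b)) := stmt11_gauss_lint b hb (π / 2)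
  calc ∫⁻ θ in Ioo (-π) π, ENNReal.ofReal (exp (-(a * cos θ ^ 2)))
      ≤ ∫⁻ θ in Ioc (-π) 0 ∪ Ioc 0 π, ENNReal.ofReal (exp (-(a * cos θ ^ 2))) :=
        lintegral_mono_set hmono
    _ ≤ _ + _ := lintegral_union_le _ _ _
    _ ≤ ENNReal.ofReal (Real.sqrt (π / b)) + ENNReal.ofReal (Real.sqrt (π / b)) :=
        add_le_add hneg hpos
    _ = ENNReal.ofReal (2 * Real.sqrt (π / b)) := by
        rw [← ENNReal.ofReal_add (Real.sqrt_nonneg _) (Real.sqrt_nonneg _)]; ring_nf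
    _ ≤ ENNReal.ofReal (π ^ 2 / Real.sqrt a) := by
        apply ENNReal.ofReal_le_ofReal
        have h1 : π / b ≤ π ^ 4 / (4 * a) := by
          have he : π / b = π ^ 3 / (4 * a) := by rw [hbdef]; field_simp
          rw [he]
          have h3 : π ^ 3 ≤ π ^ 4 := pow_le_pow_right₀ (by linarith [two_le_pi]) (by norm_num)
          gcongr
        have h2 : Real.sqrt (π ^ 4 / (4 * a)) = π ^ 2 / (2 * Real.sqrt a) := by
          rw [show π ^ 4 / (4 * a) = (π ^ 2 / (2 * Real.sqrt a)) ^ 2 by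
            rw [div_pow, mul_pow, Real.sq_sqrt ha.le]; ring]
          exact Real.sqrt_sq (by positivity)
        calc 2 * Real.sqrt (π / b) ≤ 2 * Real.sqrt (π ^ 4 / (4 * a)) := by
              have := Real.sqrt_le_sqrt h1
              linarith
          _ = π ^ 2 / Real.sqrt a := by rw [h2]; field_simp

theorem stmt11_radial_le (ν r : ℝ) (hν : 0 < ν) (hr : 0 ≤ r) :
    ∫⁻ ρ in Ioi (0:ℝ), ENNReal.ofReal (ρ * ((1 + ρ ^ 2) ^ r / (1 + ρ ^ (1 + ν + r)) ^ 2))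
      ≤ ENNReal.ofReal ((2:ℝ) ^ r * (1 + 1 / (2 * ν))) := by
  have h2r : (0:ℝ) < 2 ^ r := by positivity
  have piece1 : ∫⁻ ρ in Ioc (0:ℝ) 1, ENNReal.ofReal (ρ * ((1 + ρ ^ 2) ^ r / (1 + ρ ^ (1 + ν + r)) ^ 2))
      ≤ ENNReal.ofReal ((2:ℝ) ^ r) := by
    calc ∫⁻ ρ in Ioc (0:ℝ) 1, ENNReal.ofReal (ρ * ((1 + ρ ^ 2) ^ r / (1 + ρ ^ (1 + ν + r)) ^ 2))
        ≤ ∫⁻ _ρ in Ioc (0:ℝ) 1, ENNReal.ofReal ((2:ℝ) ^ r) := by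
          refine setLIntegral_mono measurable_const fun ρ hρ => ?_
          apply ENNReal.ofReal_le_ofReal
          have hρ0 : 0 < ρ := hρ.1
          have hnum : (1 + ρ ^ 2) ^ r ≤ (2:ℝ) ^ r :=
            Real.rpow_le_rpow (by positivity) (by nlinarith [hρ.2, hρ0.le]) hr
          have hden : (1:ℝ) ≤ (1 + ρ ^ (1 + ν + r)) ^ 2 := by
            have : (0:ℝ) ≤ ρ ^ (1 + ν + r) := Real.rpow_nonneg hρ0.le _
            nlinarith
          have hq : (1 + ρ ^ 2) ^ r / (1 + ρ ^ (1 + ν + r)) ^ 2 ≤ (2:ℝ) ^ r := by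
            calc (1 + ρ ^ 2) ^ r / (1 + ρ ^ (1 + ν + r)) ^ 2 ≤ (1 + ρ ^ 2) ^ r / 1 := by
                  gcongr
              _ = (1 + ρ ^ 2) ^ r := div_one _
              _ ≤ (2:ℝ) ^ r := hnum
          calc ρ * ((1 + ρ ^ 2) ^ r / (1 + ρ ^ (1 + ν + r)) ^ 2)
              ≤ 1 * ((2:ℝ) ^ r) := by
                apply mul_le_mul hρ.2 hq (by positivity) (by norm_num)
            _ = (2:ℝ) ^ r := one_mul _
      _ = ENNReal.ofReal ((2:ℝ) ^ r) := by
          rw [setLIntegral_const]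
          simp [Real.volume_Ioc]
  have piece2 : ∫⁻ ρ in Ioi (1:ℝ), ENNReal.ofReal (ρ * ((1 + ρ ^ 2) ^ r / (1 + ρ ^ (1 + ν + r)) ^ 2))
      ≤ ENNReal.ofReal ((2:ℝ) ^ r * (1 / (2 * ν))) := by
    have hc : -(1 + 2 * ν) < -1 := by linarith
    calc ∫⁻ ρ in Ioi (1:ℝ), ENNReal.ofReal (ρ * ((1 + ρ ^ 2) ^ r / (1 + ρ ^ (1 + ν + r)) ^ 2))
        ≤ ∫⁻ ρ in Ioi (1:ℝ), ENNReal.ofReal ((2:ℝ) ^ r * ρ ^ (-(1 + 2 * ν))) := by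
          refine setLIntegral_mono (by fun_prop) fun ρ hρ => ?_
          apply ENNReal.ofReal_le_ofReal
          have hρ1 : (1:ℝ) < ρ := hρ
          have hρ0 : (0:ℝ) < ρ := lt_trans one_pos hρ1
          have hsq : ((ρ ^ 2 : ℝ)) ^ r = ρ ^ (2 * r) := by
            rw [← Real.rpow_natCast ρ 2, ← Real.rpow_mul hρ0.le]
            norm_num
          have hnum : (1 + ρ ^ 2) ^ r ≤ (2:ℝ) ^ r * ρ ^ (2 * r) := by
            rw [← hsq, ← Real.mul_rpow (by norm_num) (by positivity)]
            exact Real.rpow_le_rpow (by positivity) (by nlinarith) hr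
          have hden : ρ ^ (2 * (1 + ν + r)) ≤ (1 + ρ ^ (1 + ν + r)) ^ 2 := by
            have h1 : ρ ^ (2 * (1 + ν + r)) = (ρ ^ (1 + ν + r)) ^ 2 := by
              rw [← Real.rpow_natCast (ρ ^ (1 + ν + r)) 2, ← Real.rpow_mul hρ0.le]
              norm_num
              ring_nf
            rw [h1]
            have : (0:ℝ) ≤ ρ ^ (1 + ν + r) := Real.rpow_nonneg hρ0.le _
            nlinarith
          have hdenpos : (0:ℝ) < ρ ^ (2 * (1 + ν + r)) := Real.rpow_pos_of_pos hρ0 _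
          calc ρ * ((1 + ρ ^ 2) ^ r / (1 + ρ ^ (1 + ν + r)) ^ 2)
              ≤ ρ * ((2:ℝ) ^ r * ρ ^ (2 * r) / ρ ^ (2 * (1 + ν + r))) := by
                gcongr
            _ = (2:ℝ) ^ r * (ρ ^ (1:ℝ) * ρ ^ (2 * r) / ρ ^ (2 * (1 + ν + r))) := by
                rw [Real.rpow_one]; ring
            _ = (2:ℝ) ^ r * ρ ^ (-(1 + 2 * ν)) := by
                rw [← Real.rpow_add hρ0, ← Real.rpow_sub hρ0]
                congr 1
                ring_nf
      _ = ENNReal.ofReal ((2:ℝ) ^ r * (1 / (2 * ν))) := by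
          rw [← ofReal_integral_eq_lintegral_ofReal]
          · congr 1
            rw [MeasureTheory.integral_const_mul, integral_Ioi_rpow_of_lt hc one_pos]
            rw [Real.one_rpow]
            congr 1
            field_simp
            ring
          · exact (integrableOn_Ioi_rpow_of_lt hc one_pos).const_mul _
          · filter_upwards [ae_restrict_mem measurableSet_Ioi] with x hx
            have : (0:ℝ) < x := lt_trans one_pos hx
            positivity
  calc ∫⁻ ρ in Ioi (0:ℝ), ENNReal.ofReal (ρ * ((1 + ρ ^ 2) ^ r / (1 + ρ ^ (1 + ν + r)) ^ 2))
      = ∫⁻ ρ in Ioc (0:ℝ) 1 ∪ Ioi 1, ENNReal.ofReal (ρ * ((1 + ρ ^ 2) ^ r / (1 + ρ ^ (1 + ν + r)) ^ 2)) := by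
        rw [Ioc_union_Ioi_eq_Ioi zero_le_one]
    _ ≤ _ + _ := lintegral_union_le _ _ _
    _ ≤ ENNReal.ofReal ((2:ℝ) ^ r) + ENNReal.ofReal ((2:ℝ) ^ r * (1 / (2 * ν))) :=
        add_le_add piece1 piece2
    _ = ENNReal.ofReal ((2:ℝ) ^ r * (1 + 1 / (2 * ν))) := by
        rw [← ENNReal.ofReal_add (by positivity) (by positivity)]
        congr 1
        ring

set_option maxHeartbeats 2000000 in
/-- linear decay estimate `‖b(t)‖_{H^r} ≲ t^{-1/4} B₀ + t^{-3/4} W₀`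
for `b̂(t,ξ) = e^{-C(ξ₁²/|ξ|²)t} b̂₀(ξ) + (|ξ₁|/|ξ|) e^{-C(ξ₁²/|ξ|²)t} Ω̂₀(ξ)`,
assuming `|b̂₀(ξ)| ≤ B₀/(1+|ξ|^{1+ν+r})` and `|Ω̂₀(ξ)| ≤ W₀/(1+|ξ|^{1+ν+r})`. -/
theorem stmt11 (α N C : ℝ) (hα : 0 < α) (hN : 0 < N) (hC : 0 < C)
    (ν r : ℝ) (hν : 0 < ν) (hr : 0 ≤ r)
    (b₀ Ω₀ : EuclideanSpace ℝ (Fin 2) → ℝ) (B₀ W₀ : ℝ)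
    (hb₀ : ∀ ξ, ‖𝓕 (fun x => (b₀ x : ℂ)) ξ‖ ≤ B₀ / (1 + ‖ξ‖ ^ (1 + ν + r)))
    (hΩ₀ : ∀ ξ, ‖𝓕 (fun x => (Ω₀ x : ℂ)) ξ‖ ≤ W₀ / (1 + ‖ξ‖ ^ (1 + ν + r))) :
    ∃ K : ℝ, 0 < K ∧ ∀ t : ℝ, 1 ≤ t →
      (∫⁻ ξ : EuclideanSpace ℝ (Fin 2),
          ENNReal.ofReal ((1 + ‖ξ‖ ^ 2) ^ r *
            ‖(Real.exp (-C * (ξ 0) ^ 2 / ‖ξ‖ ^ 2 * t) : ℂ) * 𝓕 (fun x => (b₀ x : ℂ)) ξ +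
              ((|ξ 0| / ‖ξ‖ : ℝ) : ℂ) * (Real.exp (-C * (ξ 0) ^ 2 / ‖ξ‖ ^ 2 * t) : ℂ) *
                𝓕 (fun x => (Ω₀ x : ℂ)) ξ‖ ^ 2)) ^ ((1:ℝ)/2)
        ≤ ENNReal.ofReal (K * (t ^ (-(1:ℝ)/4) * B₀ + t ^ (-(3:ℝ)/4) * W₀)) := by
  have hπ := pi_pos
  have he0 : (0:ℝ) < 1 + ν + r := by linarith only [hν, hr]
  have hB₀ : 0 ≤ B₀ := by
    have h := (norm_nonneg (𝓕 (fun x => (b₀ x : ℂ)) 0)).trans (hb₀ 0)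
    rwa [norm_zero, Real.zero_rpow he0.ne', add_zero, div_one] at h
  have hW₀ : 0 ≤ W₀ := by
    have h := (norm_nonneg (𝓕 (fun x => (Ω₀ x : ℂ)) 0)).trans (hΩ₀ 0)
    rwa [norm_zero, Real.zero_rpow he0.ne', add_zero, div_one] at h
  obtain ⟨c₁, hc₁⟩ : ∃ c₁ : ℝ, c₁ = π ^ 2 / Real.sqrt C := ⟨_, rfl⟩
  obtain ⟨c₂, hc₂⟩ : ∃ c₂ : ℝ, c₂ = π ^ 2 / (C * Real.sqrt C) := ⟨_, rfl⟩
  have hc₁0 : 0 < c₁ := by rw [hc₁]; positivity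
  have hc₂0 : 0 < c₂ := by rw [hc₂]; positivity
  obtain ⟨A₁, hA₁⟩ : ∃ A₁ : ℝ, A₁ = 2 * ((2:ℝ) ^ r * (1 + 1 / (2 * ν))) := ⟨_, rfl⟩
  have hA₁0 : 0 < A₁ := by rw [hA₁]; positivity
  obtain ⟨K, hK⟩ : ∃ K : ℝ, K = max 1 (Real.sqrt (A₁ * c₁) + Real.sqrt (A₁ * c₂)) := ⟨_, rfl⟩
  have hK1 : (1:ℝ) ≤ K := hK ▸ le_max_left _ _
  refine ⟨K, lt_of_lt_of_le one_pos hK1, ?_⟩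
  intro t ht
  have ht0 : (0:ℝ) < t := lt_of_lt_of_le one_pos ht
  have hCt : (0:ℝ) < C * t := by positivity
  obtain ⟨F, hF⟩ : ∃ F : ℝ → ℝ, F = fun ρ => (1 + ρ ^ 2) ^ r / (1 + ρ ^ (1 + ν + r)) ^ 2 :=
    ⟨_, rfl⟩
  obtain ⟨Φ, hΦ⟩ : ∃ Φ : ℝ × ℝ → ℝ, Φ = fun p =>
      2 * F (Real.sqrt (p.1 ^ 2 + p.2 ^ 2)) *
        (B₀ ^ 2 * exp (-(2 * C * t * (p.1 ^ 2 / (p.1 ^ 2 + p.2 ^ 2)))) +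
          W₀ ^ 2 * (p.1 ^ 2 / (p.1 ^ 2 + p.2 ^ 2)) *
            exp (-(2 * C * t * (p.1 ^ 2 / (p.1 ^ 2 + p.2 ^ 2))))) := ⟨_, rfl⟩
  obtain ⟨M, hM⟩ : ∃ M : ℝ, M = K * (t ^ (-(1:ℝ)/4) * B₀ + t ^ (-(3:ℝ)/4) * W₀) := ⟨_, rfl⟩
  have htq0 : (0:ℝ) ≤ t ^ (-(1:ℝ)/4) := Real.rpow_nonneg ht0.le _
  have htq0' : (0:ℝ) ≤ t ^ (-(3:ℝ)/4) := Real.rpow_nonneg ht0.le _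
  have hM0 : 0 ≤ M := by
    rw [hM]
    exact mul_nonneg (by linarith only [hK1])
      (add_nonneg (mul_nonneg htq0 hB₀) (mul_nonneg htq0' hW₀))
  -- pointwise bound
  have hpt : ∀ ξ : EuclideanSpace ℝ (Fin 2),
      ENNReal.ofReal ((1 + ‖ξ‖ ^ 2) ^ r *
        ‖(Real.exp (-C * (ξ 0) ^ 2 / ‖ξ‖ ^ 2 * t) : ℂ) * 𝓕 (fun x => (b₀ x : ℂ)) ξ +
          ((|ξ 0| / ‖ξ‖ : ℝ) : ℂ) * (Real.exp (-C * (ξ 0) ^ 2 / ‖ξ‖ ^ 2 * t) : ℂ) *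
            𝓕 (fun x => (Ω₀ x : ℂ)) ξ‖ ^ 2) ≤ ENNReal.ofReal (Φ (ξ 0, ξ 1)) := by
    intro ξ
    apply ENNReal.ofReal_le_ofReal
    obtain ⟨x, hx⟩ : ∃ x : ℝ, x = ξ 0 := ⟨_, rfl⟩
    obtain ⟨y, hy⟩ : ∃ y : ℝ, y = ξ 1 := ⟨_, rfl⟩
    rw [← hx, ← hy]
    have hn : ‖ξ‖ = Real.sqrt (x ^ 2 + y ^ 2) := by
      rw [EuclideanSpace.norm_eq]
      congr 1
      rw [Fin.sum_univ_two, hx, hy]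
      simp [sq_abs]
    have hn2 : ‖ξ‖ ^ 2 = x ^ 2 + y ^ 2 := by
      rw [hn, Real.sq_sqrt (by positivity)]
    obtain ⟨E, hE⟩ : ∃ E : ℝ, E = Real.exp (-C * x ^ 2 / ‖ξ‖ ^ 2 * t) := ⟨_, rfl⟩
    obtain ⟨s, hs⟩ : ∃ s : ℝ, s = |x| / ‖ξ‖ := ⟨_, rfl⟩
    obtain ⟨σ, hσ⟩ : ∃ σ : ℝ, σ = x ^ 2 / (x ^ 2 + y ^ 2) := ⟨_, rfl⟩
    obtain ⟨D, hD⟩ : ∃ D : ℝ, D = 1 + ‖ξ‖ ^ (1 + ν + r) := ⟨_, rfl⟩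
    rw [← hE, ← hs]
    have hD1 : (1:ℝ) ≤ D := by
      have : (0:ℝ) ≤ ‖ξ‖ ^ (1 + ν + r) := Real.rpow_nonneg (norm_nonneg _) _
      rw [hD]; linarith only [this]
    have hD0 : (0:ℝ) < D := lt_of_lt_of_le one_pos hD1
    have hs0 : 0 ≤ s := hs ▸ div_nonneg (abs_nonneg _) (norm_nonneg _)
    have hs2 : s ^ 2 = σ := by rw [hs, div_pow, sq_abs, hn2, ← hσ]
    have hE0 : 0 < E := hE ▸ exp_pos _
    have hE2 : E ^ 2 = exp (-(2 * C * t * σ)) := by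
      rw [hE, ← Real.exp_nat_mul]
      congr 1
      rw [hσ, ← hn2]
      push_cast
      ring
    have hXb := hb₀ ξ
    have hXw := hΩ₀ ξ
    rw [← hD] at hXb hXw
    have hnorm : ‖(E : ℂ) * 𝓕 (fun x => (b₀ x : ℂ)) ξ +
        ((s : ℝ) : ℂ) * (E : ℂ) * 𝓕 (fun x => (Ω₀ x : ℂ)) ξ‖ ≤ E * (B₀ + s * W₀) / D := by
      calc ‖(E : ℂ) * 𝓕 (fun x => (b₀ x : ℂ)) ξ + ((s : ℝ) : ℂ) * (E : ℂ) * 𝓕 (fun x => (Ω₀ x : ℂ)) ξ‖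
          ≤ ‖(E : ℂ) * 𝓕 (fun x => (b₀ x : ℂ)) ξ‖ +
              ‖((s : ℝ) : ℂ) * (E : ℂ) * 𝓕 (fun x => (Ω₀ x : ℂ)) ξ‖ := norm_add_le _ _
        _ = E * ‖𝓕 (fun x => (b₀ x : ℂ)) ξ‖ + s * E * ‖𝓕 (fun x => (Ω₀ x : ℂ)) ξ‖ := by
            rw [norm_mul, norm_mul, norm_mul, Complex.norm_real, Complex.norm_real,
              Real.norm_eq_abs, Real.norm_eq_abs, abs_of_pos hE0, abs_of_nonneg hs0]
        _ ≤ E * (B₀ / D) + s * E * (W₀ / D) := by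
            apply add_le_add
            · exact mul_le_mul_of_nonneg_left hXb hE0.le
            · exact mul_le_mul_of_nonneg_left hXw (by positivity)
        _ = E * (B₀ + s * W₀) / D := by ring
    have hsq : ‖(E : ℂ) * 𝓕 (fun x => (b₀ x : ℂ)) ξ +
        ((s : ℝ) : ℂ) * (E : ℂ) * 𝓕 (fun x => (Ω₀ x : ℂ)) ξ‖ ^ 2
        ≤ 2 * (1 / D ^ 2) * (exp (-(2 * C * t * σ)) * (B₀ ^ 2 + σ * W₀ ^ 2)) := by
      calc ‖(E : ℂ) * 𝓕 (fun x => (b₀ x : ℂ)) ξ +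
          ((s : ℝ) : ℂ) * (E : ℂ) * 𝓕 (fun x => (Ω₀ x : ℂ)) ξ‖ ^ 2
          ≤ (E * (B₀ + s * W₀) / D) ^ 2 := pow_le_pow_left₀ (norm_nonneg _) hnorm 2
        _ = E ^ 2 * (B₀ + s * W₀) ^ 2 * (1 / D ^ 2) := by ring
        _ ≤ E ^ 2 * (2 * (B₀ ^ 2 + s ^ 2 * W₀ ^ 2)) * (1 / D ^ 2) := by
            gcongr
            linarith only [sq_nonneg (B₀ - s * W₀)]
        _ = 2 * (1 / D ^ 2) * (exp (-(2 * C * t * σ)) * (B₀ ^ 2 + σ * W₀ ^ 2)) := by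
            rw [← hE2, ← hs2]; ring
    have hΦeq : Φ (x, y) =
        (1 + ‖ξ‖ ^ 2) ^ r *
          (2 * (1 / D ^ 2) * (exp (-(2 * C * t * σ)) * (B₀ ^ 2 + σ * W₀ ^ 2))) := by
      simp only [hΦ]
      rw [← hn, ← hσ, hF]
      simp only
      rw [← hD]
      ring
    rw [hΦeq]
    exact mul_le_mul_of_nonneg_left hsq (Real.rpow_nonneg (by positivity) _)
  -- transfer to ℝ × ℝ
  have hmp : MeasurePreserving
      (⇑((MeasurableEquiv.toLp 2 (Fin 2 → ℝ)).symm.trans MeasurableEquiv.finTwoArrow))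
      volume volume :=
    (volume_preserving_finTwoArrow ℝ).comp (EuclideanSpace.volume_preserving_symm_measurableEquiv_toLp (Fin 2))
  have step2 : ∫⁻ p : ℝ × ℝ, ENNReal.ofReal (Φ p) =
      ∫⁻ ξ : EuclideanSpace ℝ (Fin 2), ENNReal.ofReal (Φ (ξ 0, ξ 1)) :=
    hmp.lintegral_map_equiv (fun p => ENNReal.ofReal (Φ p)) _
  -- angular function
  obtain ⟨f1, hf1⟩ : ∃ f1 : ℝ → ℝ≥0∞, f1 = fun ρ => ENNReal.ofReal (2 * (ρ * F ρ)) := ⟨_, rfl⟩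
  obtain ⟨f2, hf2⟩ : ∃ f2 : ℝ → ℝ≥0∞, f2 = fun θ =>
      ENNReal.ofReal (B₀ ^ 2 * exp (-(2 * C * t * cos θ ^ 2)) +
        W₀ ^ 2 * cos θ ^ 2 * exp (-(2 * C * t * cos θ ^ 2))) := ⟨_, rfl⟩
  have step3 : ∫⁻ p : ℝ × ℝ, ENNReal.ofReal (Φ p)
      = ∫⁻ q in polarCoord.target, f1 q.1 * f2 q.2 := by
    rw [stmt11_lintegral_polar (fun p => ENNReal.ofReal (Φ p))]
    refine setLIntegral_congr_fun polarCoord.open_target.measurableSet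
      (fun q hq => ?_)
    have hρ : 0 < q.1 := hq.1
    have hsymm : polarCoord.symm q = (q.1 * cos q.2, q.1 * sin q.2) := rfl
    rw [hsymm]
    simp only [hΦ]
    have hxy : (q.1 * cos q.2) ^ 2 + (q.1 * sin q.2) ^ 2 = q.1 ^ 2 := by
      calc (q.1 * cos q.2) ^ 2 + (q.1 * sin q.2) ^ 2 = q.1 ^ 2 * (sin q.2 ^ 2 + cos q.2 ^ 2) := by
            ring
        _ = q.1 ^ 2 := by rw [sin_sq_add_cos_sq, mul_one]
    rw [hxy, Real.sqrt_sq hρ.le]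
    have hσq : (q.1 * cos q.2) ^ 2 / q.1 ^ 2 = cos q.2 ^ 2 := by
      rw [mul_pow]
      field_simp
    rw [hσq, hf1, hf2]
    simp only
    have hF0 : (0:ℝ) ≤ F q.1 := by simp only [hF]; positivity
    rw [← ENNReal.ofReal_mul hρ.le,
      ← ENNReal.ofReal_mul (mul_nonneg (by norm_num : (0:ℝ) ≤ 2) (mul_nonneg hρ.le hF0))]
    congr 1
    ring
  have step4 : ∫⁻ q in polarCoord.target, f1 q.1 * f2 q.2
      = (∫⁻ ρ in Ioi (0:ℝ), f1 ρ) * ∫⁻ θ in Ioo (-π) π, f2 θ := by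
    have htarget : polarCoord.target = Ioi (0:ℝ) ×ˢ Ioo (-π) π := rfl
    rw [htarget, Measure.volume_eq_prod, ← Measure.prod_restrict]
    refine lintegral_prod_mul ?_ ?_
    · simp only [hf1, hF]; fun_prop
    · simp only [hf2]; fun_prop
  have step5 : ∫⁻ ρ in Ioi (0:ℝ), f1 ρ ≤ ENNReal.ofReal A₁ := by
    have hc : ∀ ρ : ℝ, f1 ρ = ENNReal.ofReal 2 * ENNReal.ofReal (ρ * F ρ) := by
      intro ρ; rw [hf1]; exact ENNReal.ofReal_mul (by norm_num)
    calc ∫⁻ ρ in Ioi (0:ℝ), f1 ρ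
        = ENNReal.ofReal 2 * ∫⁻ ρ in Ioi (0:ℝ), ENNReal.ofReal (ρ * F ρ) := by
          simp_rw [hc]; exact lintegral_const_mul' _ _ ENNReal.ofReal_ne_top
      _ ≤ ENNReal.ofReal 2 * ENNReal.ofReal ((2:ℝ) ^ r * (1 + 1 / (2 * ν))) := by
          gcongr
          simpa only [hF] using stmt11_radial_le ν r hν hr
      _ = ENNReal.ofReal A₁ := by
          rw [← ENNReal.ofReal_mul (by norm_num), hA₁]
  have step6 : ∫⁻ θ in Ioo (-π) π, f2 θ
      ≤ ENNReal.ofReal (B₀ ^ 2 * (π ^ 2 / Real.sqrt (2 * C * t)) +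
          W₀ ^ 2 / (C * t) * (π ^ 2 / Real.sqrt (C * t))) := by
    have hkey : ∀ θ : ℝ, W₀ ^ 2 * cos θ ^ 2 * exp (-(2 * C * t * cos θ ^ 2))
        ≤ W₀ ^ 2 / (C * t) * exp (-(C * t * cos θ ^ 2)) := by
      intro θ
      obtain ⟨u, hu⟩ : ∃ u : ℝ, u = C * t * cos θ ^ 2 := ⟨_, rfl⟩
      have hu0 : 0 ≤ u := by rw [hu]; positivity
      have h1 : u ≤ exp u := by linarith only [add_one_le_exp u]
      have h3 : exp u * exp (-u) = 1 := by rw [← exp_add]; simp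
      have h4 : 0 < exp (-u) := exp_pos _
      have h6 : u * exp (-u) ≤ 1 := by linarith only [mul_le_mul_of_nonneg_right h1 h4.le, h3]
      have h2 : exp (-(2 * C * t * cos θ ^ 2)) = exp (-u) * exp (-u) := by
        rw [← exp_add]; congr 1; rw [hu]; ring
      have h5 : cos θ ^ 2 = u / (C * t) := by rw [hu]; field_simp
      rw [h2, show -(C * t * cos θ ^ 2) = -u from by rw [hu], h5]
      calc W₀ ^ 2 * (u / (C * t)) * (exp (-u) * exp (-u))
          = W₀ ^ 2 / (C * t) * (u * exp (-u) * exp (-u)) := by ring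
        _ ≤ W₀ ^ 2 / (C * t) * (1 * exp (-u)) := by
            apply mul_le_mul_of_nonneg_left _ (by positivity)
            apply mul_le_mul_of_nonneg_right h6 h4.le
        _ = W₀ ^ 2 / (C * t) * exp (-u) := by ring
    calc ∫⁻ θ in Ioo (-π) π, f2 θ
        ≤ ∫⁻ θ in Ioo (-π) π,
            (ENNReal.ofReal (B₀ ^ 2 * exp (-(2 * C * t * cos θ ^ 2))) +
              ENNReal.ofReal (W₀ ^ 2 / (C * t) * exp (-(C * t * cos θ ^ 2)))) := by
          refine lintegral_mono fun θ => ?_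
          rw [hf2]
          refine le_trans (ENNReal.ofReal_le_ofReal (add_le_add_right (hkey θ) _)) ?_
          exact ENNReal.ofReal_add_le
      _ = (∫⁻ θ in Ioo (-π) π, ENNReal.ofReal (B₀ ^ 2 * exp (-(2 * C * t * cos θ ^ 2)))) +
            ∫⁻ θ in Ioo (-π) π, ENNReal.ofReal (W₀ ^ 2 / (C * t) * exp (-(C * t * cos θ ^ 2))) :=
          lintegral_add_left (by fun_prop) _
      _ ≤ ENNReal.ofReal (B₀ ^ 2) * ENNReal.ofReal (π ^ 2 / Real.sqrt (2 * C * t)) +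
            ENNReal.ofReal (W₀ ^ 2 / (C * t)) * ENNReal.ofReal (π ^ 2 / Real.sqrt (C * t)) := by
          apply add_le_add
          · calc ∫⁻ θ in Ioo (-π) π, ENNReal.ofReal (B₀ ^ 2 * exp (-(2 * C * t * cos θ ^ 2)))
                = ENNReal.ofReal (B₀ ^ 2) *
                    ∫⁻ θ in Ioo (-π) π, ENNReal.ofReal (exp (-(2 * C * t * cos θ ^ 2))) := by
                  simp_rw [ENNReal.ofReal_mul (sq_nonneg B₀)]
                  exact lintegral_const_mul' _ _ ENNReal.ofReal_ne_top
              _ ≤ _ := mul_le_mul_right (stmt11_ang_le (2 * C * t) (by positivity)) _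
          · calc ∫⁻ θ in Ioo (-π) π, ENNReal.ofReal (W₀ ^ 2 / (C * t) * exp (-(C * t * cos θ ^ 2)))
                = ENNReal.ofReal (W₀ ^ 2 / (C * t)) *
                    ∫⁻ θ in Ioo (-π) π, ENNReal.ofReal (exp (-(C * t * cos θ ^ 2))) := by
                  simp_rw [ENNReal.ofReal_mul (by positivity : (0:ℝ) ≤ W₀ ^ 2 / (C * t))]
                  exact lintegral_const_mul' _ _ ENNReal.ofReal_ne_top
              _ ≤ _ := mul_le_mul_right (stmt11_ang_le (C * t) hCt) _
      _ = ENNReal.ofReal (B₀ ^ 2 * (π ^ 2 / Real.sqrt (2 * C * t)) +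
            W₀ ^ 2 / (C * t) * (π ^ 2 / Real.sqrt (C * t))) := by
          rw [← ENNReal.ofReal_mul (sq_nonneg B₀), ← ENNReal.ofReal_mul (by positivity),
            ← ENNReal.ofReal_add (by positivity) (by positivity)]
  -- real arithmetic: the combined bound is at most M ^ 2
  have hreal : A₁ * (B₀ ^ 2 * (π ^ 2 / Real.sqrt (2 * C * t)) +
      W₀ ^ 2 / (C * t) * (π ^ 2 / Real.sqrt (C * t))) ≤ M ^ 2 := by
    have hst : (0:ℝ) < Real.sqrt t := Real.sqrt_pos.2 ht0
    have hsC : (0:ℝ) < Real.sqrt C := Real.sqrt_pos.2 hC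
    have hhalf : t ^ (-(1:ℝ)/2) = (Real.sqrt t)⁻¹ := by
      rw [show (-(1:ℝ)/2) = -(1/2 : ℝ) by norm_num, Real.rpow_neg ht0.le, Real.sqrt_eq_rpow]
    have h32 : t ^ (-(3:ℝ)/2) = (t * Real.sqrt t)⁻¹ := by
      rw [show (-(3:ℝ)/2) = (-1) + (-(1:ℝ)/2) by norm_num, Real.rpow_add ht0,
        Real.rpow_neg_one, hhalf, mul_inv]
    have h1 : π ^ 2 / Real.sqrt (2 * C * t) ≤ c₁ * t ^ (-(1:ℝ)/2) := by
      have hm : Real.sqrt (C * t) ≤ Real.sqrt (2 * C * t) :=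
        Real.sqrt_le_sqrt (by linarith only [hCt])
      have hmul : Real.sqrt (C * t) = Real.sqrt C * Real.sqrt t := Real.sqrt_mul hC.le t
      calc π ^ 2 / Real.sqrt (2 * C * t) ≤ π ^ 2 / Real.sqrt (C * t) := by
            gcongr
        _ = c₁ * t ^ (-(1:ℝ)/2) := by
            rw [hc₁, hhalf, hmul]
            field_simp
    have h2 : (1 / (C * t)) * (π ^ 2 / Real.sqrt (C * t)) ≤ c₂ * t ^ (-(3:ℝ)/2) := by
      have hmul : Real.sqrt (C * t) = Real.sqrt C * Real.sqrt t := Real.sqrt_mul hC.le t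
      rw [hc₂, h32, hmul]
      apply le_of_eq
      field_simp
    have hq2 : (t ^ (-(1:ℝ)/4)) ^ 2 = t ^ (-(1:ℝ)/2) := by
      rw [← Real.rpow_natCast (t ^ (-(1:ℝ)/4)) 2, ← Real.rpow_mul ht0.le]
      norm_num
    have hq2' : (t ^ (-(3:ℝ)/4)) ^ 2 = t ^ (-(3:ℝ)/2) := by
      rw [← Real.rpow_natCast (t ^ (-(3:ℝ)/4)) 2, ← Real.rpow_mul ht0.le]
      norm_num
    have hKc₁ : A₁ * c₁ ≤ K ^ 2 := by
      have h := hK ▸ le_max_right 1 (Real.sqrt (A₁ * c₁) + Real.sqrt (A₁ * c₂))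
      have h' : Real.sqrt (A₁ * c₁) ≤ K :=
        le_trans (le_add_of_nonneg_right (Real.sqrt_nonneg _)) h
      calc A₁ * c₁ = Real.sqrt (A₁ * c₁) ^ 2 := (Real.sq_sqrt (by positivity)).symm
        _ ≤ K ^ 2 := pow_le_pow_left₀ (Real.sqrt_nonneg _) h' 2
    have hKc₂ : A₁ * c₂ ≤ K ^ 2 := by
      have h := hK ▸ le_max_right 1 (Real.sqrt (A₁ * c₁) + Real.sqrt (A₁ * c₂))
      have h' : Real.sqrt (A₁ * c₂) ≤ K :=
        le_trans (le_add_of_nonneg_left (Real.sqrt_nonneg _)) h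
      calc A₁ * c₂ = Real.sqrt (A₁ * c₂) ^ 2 := (Real.sq_sqrt (by positivity)).symm
        _ ≤ K ^ 2 := pow_le_pow_left₀ (Real.sqrt_nonneg _) h' 2
    have e1 : A₁ * (B₀ ^ 2 * (c₁ * t ^ (-(1:ℝ)/2))) ≤ K ^ 2 * (t ^ (-(1:ℝ)/4) * B₀) ^ 2 := by
      have hrw : K ^ 2 * (t ^ (-(1:ℝ)/4) * B₀) ^ 2 = K ^ 2 * (B₀ ^ 2 * t ^ (-(1:ℝ)/2)) := by
        rw [mul_pow, hq2]; ring
      rw [hrw, show A₁ * (B₀ ^ 2 * (c₁ * t ^ (-(1:ℝ)/2))) =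
        (A₁ * c₁) * (B₀ ^ 2 * t ^ (-(1:ℝ)/2)) from by ring]
      exact mul_le_mul_of_nonneg_right hKc₁ (by positivity)
    have e2 : A₁ * (W₀ ^ 2 * (c₂ * t ^ (-(3:ℝ)/2))) ≤ K ^ 2 * (t ^ (-(3:ℝ)/4) * W₀) ^ 2 := by
      have hrw : K ^ 2 * (t ^ (-(3:ℝ)/4) * W₀) ^ 2 = K ^ 2 * (W₀ ^ 2 * t ^ (-(3:ℝ)/2)) := by
        rw [mul_pow, hq2']; ring
      rw [hrw, show A₁ * (W₀ ^ 2 * (c₂ * t ^ (-(3:ℝ)/2))) =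
        (A₁ * c₂) * (W₀ ^ 2 * t ^ (-(3:ℝ)/2)) from by ring]
      exact mul_le_mul_of_nonneg_right hKc₂ (by positivity)
    have hcross : 0 ≤ K ^ 2 * (t ^ (-(1:ℝ)/4) * B₀) * (t ^ (-(3:ℝ)/4) * W₀) := by positivity
    have hstep : A₁ * (B₀ ^ 2 * (π ^ 2 / Real.sqrt (2 * C * t)) +
        W₀ ^ 2 / (C * t) * (π ^ 2 / Real.sqrt (C * t)))
        ≤ A₁ * (B₀ ^ 2 * (c₁ * t ^ (-(1:ℝ)/2)) + W₀ ^ 2 * (c₂ * t ^ (-(3:ℝ)/2))) := by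
      apply mul_le_mul_of_nonneg_left _ hA₁0.le
      apply add_le_add
      · exact mul_le_mul_of_nonneg_left h1 (sq_nonneg _)
      · calc W₀ ^ 2 / (C * t) * (π ^ 2 / Real.sqrt (C * t))
            = W₀ ^ 2 * ((1 / (C * t)) * (π ^ 2 / Real.sqrt (C * t))) := by ring
          _ ≤ W₀ ^ 2 * (c₂ * t ^ (-(3:ℝ)/2)) := mul_le_mul_of_nonneg_left h2 (sq_nonneg _)
    refine hstep.trans ?_
    rw [hM]
    linarith only [e1, e2, hcross]
  -- put everything together
  have main : (∫⁻ ξ : EuclideanSpace ℝ (Fin 2),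
      ENNReal.ofReal ((1 + ‖ξ‖ ^ 2) ^ r *
        ‖(Real.exp (-C * (ξ 0) ^ 2 / ‖ξ‖ ^ 2 * t) : ℂ) * 𝓕 (fun x => (b₀ x : ℂ)) ξ +
          ((|ξ 0| / ‖ξ‖ : ℝ) : ℂ) * (Real.exp (-C * (ξ 0) ^ 2 / ‖ξ‖ ^ 2 * t) : ℂ) *
            𝓕 (fun x => (Ω₀ x : ℂ)) ξ‖ ^ 2)) ≤ ENNReal.ofReal (M ^ 2) := by
    calc _ ≤ ∫⁻ ξ : EuclideanSpace ℝ (Fin 2), ENNReal.ofReal (Φ (ξ 0, ξ 1)) :=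
          lintegral_mono hpt
      _ = ∫⁻ p : ℝ × ℝ, ENNReal.ofReal (Φ p) := step2.symm
      _ = ∫⁻ q in polarCoord.target, f1 q.1 * f2 q.2 := step3
      _ = (∫⁻ ρ in Ioi (0:ℝ), f1 ρ) * ∫⁻ θ in Ioo (-π) π, f2 θ := step4
      _ ≤ ENNReal.ofReal A₁ * ENNReal.ofReal (B₀ ^ 2 * (π ^ 2 / Real.sqrt (2 * C * t)) +
            W₀ ^ 2 / (C * t) * (π ^ 2 / Real.sqrt (C * t))) := mul_le_mul' step5 step6
      _ = ENNReal.ofReal (A₁ * (B₀ ^ 2 * (π ^ 2 / Real.sqrt (2 * C * t)) +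
            W₀ ^ 2 / (C * t) * (π ^ 2 / Real.sqrt (C * t)))) :=
          (ENNReal.ofReal_mul hA₁0.le).symm
      _ ≤ ENNReal.ofReal (M ^ 2) := ENNReal.ofReal_le_ofReal hreal
  calc (∫⁻ ξ : EuclideanSpace ℝ (Fin 2),
      ENNReal.ofReal ((1 + ‖ξ‖ ^ 2) ^ r *
        ‖(Real.exp (-C * (ξ 0) ^ 2 / ‖ξ‖ ^ 2 * t) : ℂ) * 𝓕 (fun x => (b₀ x : ℂ)) ξ +
          ((|ξ 0| / ‖ξ‖ : ℝ) : ℂ) * (Real.exp (-C * (ξ 0) ^ 2 / ‖ξ‖ ^ 2 * t) : ℂ) *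
            𝓕 (fun x => (Ω₀ x : ℂ)) ξ‖ ^ 2)) ^ ((1:ℝ)/2)
      ≤ (ENNReal.ofReal (M ^ 2)) ^ ((1:ℝ)/2) := ENNReal.rpow_le_rpow main (by norm_num)
    _ = ENNReal.ofReal M := by
        rw [ENNReal.ofReal_pow hM0, ← ENNReal.rpow_natCast (ENNReal.ofReal M) 2,
          ← ENNReal.rpow_mul]
        norm_num
    _ = ENNReal.ofReal (K * (t ^ (-(1:ℝ)/4) * B₀ + t ^ (-(3:ℝ)/4) * W₀)) := by rw [hM]
end
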